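/- The complex algebra of polynomials in two variables x, y invariant under the order-24 subgroup of SU(2) generated by iX, iZ, and Q = (1/2)·[[1+i,1+i],[−1+i,1−i]] (acting linearly on (x,y)) is generated by I₆ = x⁵y − xy⁵, I₈ = x⁸ + 14x⁴y⁴ + y⁸, and I₁₂ = x¹² − 33x⁸y⁴ − 33x⁴y⁸ + y¹². -/

import Mathlib

open Matrix Complex MvPolynomial
noncomputable section

def iX : Matrix (Fin 2) (Fin 2) ℂ := !![0, I; I, 0]

def iZ : Matrix (Fin 2) (Fin 2) ℂ := !![I, 0; 0, -I]

def Qm : Matrix (Fin 2) (Fin 2) ℂ := (1 / 2 : ℂ) • !![1 + I, 1 + I; -1 + I, 1 - I]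

/-- The binary tetrahedral group: subgroup of `SU(2)` generated by `iX`, `iZ`, `Q`. -/
def W24 : Submonoid (Matrix (Fin 2) (Fin 2) ℂ) :=
  Submonoid.closure {iX, iZ, Qm}

/-- Action of a 2×2 matrix on polynomials in `x, y` by linear substitution. -/
def actP (g : Matrix (Fin 2) (Fin 2) ℂ) (p : MvPolynomial (Fin 2) ℂ) :
    MvPolynomial (Fin 2) ℂ :=
  MvPolynomial.aeval (fun i => ∑ j, MvPolynomial.C (g i j) * MvPolynomial.X j) p

def I6 : MvPolynomial (Fin 2) ℂ := X 0 ^ 5 * X 1 - X 0 * X 1 ^ 5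

def I8 : MvPolynomial (Fin 2) ℂ := X 0 ^ 8 + C 14 * X 0 ^ 4 * X 1 ^ 4 + X 1 ^ 8

def I12 : MvPolynomial (Fin 2) ℂ :=
  X 0 ^ 12 - C 33 * X 0 ^ 8 * X 1 ^ 4 - C 33 * X 0 ^ 4 * X 1 ^ 8 + X 1 ^ 12

def rt3 : ℂ := (Real.sqrt 3 : ℝ)

def sC : ℂ := rt3 * I

def tP : MvPolynomial (Fin 2) ℂ := X 0 ^ 4 + X 1 ^ 4

def uP : MvPolynomial (Fin 2) ℂ := X 0 ^ 2 * X 1 ^ 2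

def Pp : MvPolynomial (Fin 2) ℂ := tP + C (2 * sC) * uP

def Pm : MvPolynomial (Fin 2) ℂ := tP - C (2 * sC) * uP

def om : ℂ := (-1 + sC) / 2

lemma hrt3 : rt3 ^ 2 = 3 := by
  rw [rt3]
  norm_cast
  rw [Real.sq_sqrt] <;> norm_num

set_option maxHeartbeats 2000000 in
lemma act_iX_I6 : actP iX I6 = I6 := by
  apply MvPolynomial.funext; intro c
  have hr3 := hrt3
  simp only [actP, I6, I8, I12, tP, uP, Pp, Pm, iX, iZ, Qm, sC, om, map_sub, _root_.map_mul, map_pow,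
    aeval_X, aeval_C, Fin.sum_univ_two, Matrix.cons_val_zero, Matrix.cons_val_one, Matrix.head_cons,
    Matrix.of_apply, Matrix.cons_val_fin_one, Matrix.head_fin_const, _root_.map_add, Matrix.smul_apply,
    smul_eq_mul, MvPolynomial.algebraMap_eq, eval_add, eval_mul, eval_pow, eval_sub, eval_C, eval_X]
  linear_combination ((1:ℂ)*c 0*c 1^5 + (-1:ℂ)*c 0*c 1^5*Complex.I^2 + (1:ℂ)*c 0*c 1^5*Complex.I^4 + (-1:ℂ)*c 0^5*c 1 + (1:ℂ)*c 0^5*c 1*Complex.I^2 + (-1:ℂ)*c 0^5*c 1*Complex.I^4) * Complex.I_sq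

set_option maxHeartbeats 2000000 in
lemma act_iX_I8 : actP iX I8 = I8 := by
  apply MvPolynomial.funext; intro c
  have hr3 := hrt3
  simp only [actP, I6, I8, I12, tP, uP, Pp, Pm, iX, iZ, Qm, sC, om, map_sub, _root_.map_mul, map_pow,
    aeval_X, aeval_C, Fin.sum_univ_two, Matrix.cons_val_zero, Matrix.cons_val_one, Matrix.head_cons,
    Matrix.of_apply, Matrix.cons_val_fin_one, Matrix.head_fin_const, _root_.map_add, Matrix.smul_apply,
    smul_eq_mul, MvPolynomial.algebraMap_eq, eval_add, eval_mul, eval_pow, eval_sub, eval_C, eval_X]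
  linear_combination ((-1:ℂ)*c 1^8 + (1:ℂ)*c 1^8*Complex.I^2 + (-1:ℂ)*c 1^8*Complex.I^4 + (1:ℂ)*c 1^8*Complex.I^6 + (-14:ℂ)*c 0^4*c 1^4 + (14:ℂ)*c 0^4*c 1^4*Complex.I^2 + (-14:ℂ)*c 0^4*c 1^4*Complex.I^4 + (14:ℂ)*c 0^4*c 1^4*Complex.I^6 + (-1:ℂ)*c 0^8 + (1:ℂ)*c 0^8*Complex.I^2 + (-1:ℂ)*c 0^8*Complex.I^4 + (1:ℂ)*c 0^8*Complex.I^6) * Complex.I_sq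

set_option maxHeartbeats 2000000 in
lemma act_iX_I12 : actP iX I12 = I12 := by
  apply MvPolynomial.funext; intro c
  have hr3 := hrt3
  simp only [actP, I6, I8, I12, tP, uP, Pp, Pm, iX, iZ, Qm, sC, om, map_sub, _root_.map_mul, map_pow,
    aeval_X, aeval_C, Fin.sum_univ_two, Matrix.cons_val_zero, Matrix.cons_val_one, Matrix.head_cons,
    Matrix.of_apply, Matrix.cons_val_fin_one, Matrix.head_fin_const, _root_.map_add, Matrix.smul_apply,
    smul_eq_mul, MvPolynomial.algebraMap_eq, eval_add, eval_mul, eval_pow, eval_sub, eval_C, eval_X]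
  linear_combination ((-1:ℂ)*c 1^12 + (1:ℂ)*c 1^12*Complex.I^2 + (-1:ℂ)*c 1^12*Complex.I^4 + (1:ℂ)*c 1^12*Complex.I^6 + (-1:ℂ)*c 1^12*Complex.I^8 + (1:ℂ)*c 1^12*Complex.I^10 + (33:ℂ)*c 0^4*c 1^8 + (-33:ℂ)*c 0^4*c 1^8*Complex.I^2 + (33:ℂ)*c 0^4*c 1^8*Complex.I^4 + (-33:ℂ)*c 0^4*c 1^8*Complex.I^6 + (33:ℂ)*c 0^4*c 1^8*Complex.I^8 + (-33:ℂ)*c 0^4*c 1^8*Complex.I^10 + (33:ℂ)*c 0^8*c 1^4 + (-33:ℂ)*c 0^8*c 1^4*Complex.I^2 + (33:ℂ)*c 0^8*c 1^4*Complex.I^4 + (-33:ℂ)*c 0^8*c 1^4*Complex.I^6 + (33:ℂ)*c 0^8*c 1^4*Complex.I^8 + (-33:ℂ)*c 0^8*c 1^4*Complex.I^10 + (-1:ℂ)*c 0^12 + (1:ℂ)*c 0^12*Complex.I^2 + (-1:ℂ)*c 0^12*Complex.I^4 + (1:ℂ)*c 0^12*Complex.I^6 + (-1:ℂ)*c 0^12*Complex.I^8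 + (1:ℂ)*c 0^12*Complex.I^10) * Complex.I_sq

set_option maxHeartbeats 2000000 in
lemma act_iZ_I6 : actP iZ I6 = I6 := by
  apply MvPolynomial.funext; intro c
  have hr3 := hrt3
  simp only [actP, I6, I8, I12, tP, uP, Pp, Pm, iX, iZ, Qm, sC, om, map_sub, _root_.map_mul, map_pow,
    aeval_X, aeval_C, Fin.sum_univ_two, Matrix.cons_val_zero, Matrix.cons_val_one, Matrix.head_cons,
    Matrix.of_apply, Matrix.cons_val_fin_one, Matrix.head_fin_const, _root_.map_add, Matrix.smul_apply,
    smul_eq_mul, MvPolynomial.algebraMap_eq, eval_add, eval_mul, eval_pow, eval_sub, eval_C, eval_X]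
  linear_combination ((1:ℂ)*c 0*c 1^5 + (-1:ℂ)*c 0*c 1^5*Complex.I^2 + (1:ℂ)*c 0*c 1^5*Complex.I^4 + (-1:ℂ)*c 0^5*c 1 + (1:ℂ)*c 0^5*c 1*Complex.I^2 + (-1:ℂ)*c 0^5*c 1*Complex.I^4) * Complex.I_sq

set_option maxHeartbeats 2000000 in
lemma act_iZ_I8 : actP iZ I8 = I8 := by
  apply MvPolynomial.funext; intro c
  have hr3 := hrt3
  simp only [actP, I6, I8, I12, tP, uP, Pp, Pm, iX, iZ, Qm, sC, om, map_sub, _root_.map_mul, map_pow,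
    aeval_X, aeval_C, Fin.sum_univ_two, Matrix.cons_val_zero, Matrix.cons_val_one, Matrix.head_cons,
    Matrix.of_apply, Matrix.cons_val_fin_one, Matrix.head_fin_const, _root_.map_add, Matrix.smul_apply,
    smul_eq_mul, MvPolynomial.algebraMap_eq, eval_add, eval_mul, eval_pow, eval_sub, eval_C, eval_X]
  linear_combination ((-1:ℂ)*c 1^8 + (1:ℂ)*c 1^8*Complex.I^2 + (-1:ℂ)*c 1^8*Complex.I^4 + (1:ℂ)*c 1^8*Complex.I^6 + (-14:ℂ)*c 0^4*c 1^4 + (14:ℂ)*c 0^4*c 1^4*Complex.I^2 + (-14:ℂ)*c 0^4*c 1^4*Complex.I^4 + (14:ℂ)*c 0^4*c 1^4*Complex.I^6 + (-1:ℂ)*c 0^8 + (1:ℂ)*c 0^8*Complex.I^2 + (-1:ℂ)*c 0^8*Complex.I^4 + (1:ℂ)*c 0^8*Complex.I^6) * Complex.I_sq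

set_option maxHeartbeats 2000000 in
lemma act_iZ_I12 : actP iZ I12 = I12 := by
  apply MvPolynomial.funext; intro c
  have hr3 := hrt3
  simp only [actP, I6, I8, I12, tP, uP, Pp, Pm, iX, iZ, Qm, sC, om, map_sub, _root_.map_mul, map_pow,
    aeval_X, aeval_C, Fin.sum_univ_two, Matrix.cons_val_zero, Matrix.cons_val_one, Matrix.head_cons,
    Matrix.of_apply, Matrix.cons_val_fin_one, Matrix.head_fin_const, _root_.map_add, Matrix.smul_apply,
    smul_eq_mul, MvPolynomial.algebraMap_eq, eval_add, eval_mul, eval_pow, eval_sub, eval_C, eval_X]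
  linear_combination ((-1:ℂ)*c 1^12 + (1:ℂ)*c 1^12*Complex.I^2 + (-1:ℂ)*c 1^12*Complex.I^4 + (1:ℂ)*c 1^12*Complex.I^6 + (-1:ℂ)*c 1^12*Complex.I^8 + (1:ℂ)*c 1^12*Complex.I^10 + (33:ℂ)*c 0^4*c 1^8 + (-33:ℂ)*c 0^4*c 1^8*Complex.I^2 + (33:ℂ)*c 0^4*c 1^8*Complex.I^4 + (-33:ℂ)*c 0^4*c 1^8*Complex.I^6 + (33:ℂ)*c 0^4*c 1^8*Complex.I^8 + (-33:ℂ)*c 0^4*c 1^8*Complex.I^10 + (33:ℂ)*c 0^8*c 1^4 + (-33:ℂ)*c 0^8*c 1^4*Complex.I^2 + (33:ℂ)*c 0^8*c 1^4*Complex.I^4 + (-33:ℂ)*c 0^8*c 1^4*Complex.I^6 + (33:ℂ)*c 0^8*c 1^4*Complex.I^8 + (-33:ℂ)*c 0^8*c 1^4*Complex.I^10 + (-1:ℂ)*c 0^12 + (1:ℂ)*c 0^12*Complex.I^2 + (-1:ℂ)*c 0^12*Complex.I^4 + (1:ℂ)*c 0^12*Complex.I^6 + (-1:ℂ)*c 0^12*Complex.I^8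 + (1:ℂ)*c 0^12*Complex.I^10) * Complex.I_sq

set_option maxHeartbeats 2000000 in
lemma act_Qm_I6 : actP Qm I6 = I6 := by
  apply MvPolynomial.funext; intro c
  have hr3 := hrt3
  simp only [actP, I6, I8, I12, tP, uP, Pp, Pm, iX, iZ, Qm, sC, om, map_sub, _root_.map_mul, map_pow,
    aeval_X, aeval_C, Fin.sum_univ_two, Matrix.cons_val_zero, Matrix.cons_val_one, Matrix.head_cons,
    Matrix.of_apply, Matrix.cons_val_fin_one, Matrix.head_fin_const, _root_.map_add, Matrix.smul_apply,
    smul_eq_mul, MvPolynomial.algebraMap_eq, eval_add, eval_mul, eval_pow, eval_sub, eval_C, eval_X]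
  linear_combination ((1/8 : ℂ)*c 1^6*Complex.I + (-1/8 : ℂ)*c 1^6*Complex.I^3 + (9/8 : ℂ)*c 0*c 1^5 + (-1/2 : ℂ)*c 0*c 1^5*Complex.I^2 + (-1/8 : ℂ)*c 0*c 1^5*Complex.I^4 + (5/8 : ℂ)*c 0^2*c 1^4*Complex.I + (-5/8 : ℂ)*c 0^2*c 1^4*Complex.I^3 + (-5/8 : ℂ)*c 0^4*c 1^2*Complex.I + (5/8 : ℂ)*c 0^4*c 1^2*Complex.I^3 + (-9/8 : ℂ)*c 0^5*c 1 + (1/2 : ℂ)*c 0^5*c 1*Complex.I^2 + (1/8 : ℂ)*c 0^5*c 1*Complex.I^4 + (-1/8 : ℂ)*c 0^6*Complex.I + (1/8 : ℂ)*c 0^6*Complex.I^3) * Complex.I_sq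

set_option maxHeartbeats 2000000 in
lemma act_Qm_I8 : actP Qm I8 = I8 := by
  apply MvPolynomial.funext; intro c
  have hr3 := hrt3
  simp only [actP, I6, I8, I12, tP, uP, Pp, Pm, iX, iZ, Qm, sC, om, map_sub, _root_.map_mul, map_pow,
    aeval_X, aeval_C, Fin.sum_univ_two, Matrix.cons_val_zero, Matrix.cons_val_one, Matrix.head_cons,
    Matrix.of_apply, Matrix.cons_val_fin_one, Matrix.head_fin_const, _root_.map_add, Matrix.smul_apply,
    smul_eq_mul, MvPolynomial.algebraMap_eq, eval_add, eval_mul, eval_pow, eval_sub, eval_C, eval_X]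
  linear_combination ((-15/16 : ℂ)*c 1^8 + (15/16 : ℂ)*c 1^8*Complex.I^2 + (-1/16 : ℂ)*c 1^8*Complex.I^4 + (1/16 : ℂ)*c 1^8*Complex.I^6 + (1/2 : ℂ)*c 0*c 1^7*Complex.I + (3:ℂ)*c 0*c 1^7*Complex.I^3 + (1/2 : ℂ)*c 0*c 1^7*Complex.I^5 + (7:ℂ)*c 0^2*c 1^6*Complex.I^2 + (7:ℂ)*c 0^2*c 1^6*Complex.I^4 + (7/2 : ℂ)*c 0^3*c 1^5*Complex.I + (21:ℂ)*c 0^3*c 1^5*Complex.I^3 + (7/2 : ℂ)*c 0^3*c 1^5*Complex.I^5 + (-105/8 : ℂ)*c 0^4*c 1^4 + (217/8 : ℂ)*c 0^4*c 1^4*Complex.I^2 + (105/8 : ℂ)*c 0^4*c 1^4*Complex.I^4 + (7/8 : ℂ)*c 0^4*c 1^4*Complex.I^6 + (7/2 : ℂ)*c 0^5*c 1^3*Complex.I + (21:ℂ)*c 0^5*c 1^3*Complex.I^3 + (7/2 : ℂ)*c 0^5*c 1^3*Complex.I^5 + (7:ℂ)*c 0^6*c 1^2*Complex.I^2 + (7:ℂ)*c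 0^6*c 1^2*Complex.I^4 + (1/2 : ℂ)*c 0^7*c 1*Complex.I + (3:ℂ)*c 0^7*c 1*Complex.I^3 + (1/2 : ℂ)*c 0^7*c 1*Complex.I^5 + (-15/16 : ℂ)*c 0^8 + (15/16 : ℂ)*c 0^8*Complex.I^2 + (-1/16 : ℂ)*c 0^8*Complex.I^4 + (1/16 : ℂ)*c 0^8*Complex.I^6) * Complex.I_sq

set_option maxHeartbeats 2000000 in
lemma act_Qm_I12 : actP Qm I12 = I12 := by
  apply MvPolynomial.funext; intro c
  have hr3 := hrt3
  simp only [actP, I6, I8, I12, tP, uP, Pp, Pm, iX, iZ, Qm, sC, om, map_sub, _root_.map_mul, map_pow,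
    aeval_X, aeval_C, Fin.sum_univ_two, Matrix.cons_val_zero, Matrix.cons_val_one, Matrix.head_cons,
    Matrix.of_apply, Matrix.cons_val_fin_one, Matrix.head_fin_const, _root_.map_add, Matrix.smul_apply,
    smul_eq_mul, MvPolynomial.algebraMap_eq, eval_add, eval_mul, eval_pow, eval_sub, eval_C, eval_X]
  linear_combination ((-65/64 : ℂ)*c 1^12 + (65/64 : ℂ)*c 1^12*Complex.I^2 + (-1/2 : ℂ)*c 1^12*Complex.I^4 + (1/2 : ℂ)*c 1^12*Complex.I^6 + (1/64 : ℂ)*c 1^12*Complex.I^8 + (-1/64 : ℂ)*c 1^12*Complex.I^10 + (-3/16 : ℂ)*c 0*c 1^11*Complex.I + (9/4 : ℂ)*c 0*c 1^11*Complex.I^3 + (15/8 : ℂ)*c 0*c 1^11*Complex.I^5 + (9/4 : ℂ)*c 0*c 1^11*Complex.I^7 + (-3/16 : ℂ)*c 0*c 1^11*Complex.I^9 + (33/16 : ℂ)*c 0^2*c 1^10*Complex.I^2 + (231/16 : ℂ)*c 0^2*c 1^10*Complex.I^4 + (231/16 : ℂ)*c 0^2*c 1^10*Complex.I^6 + (33/16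 : ℂ)*c 0^2*c 1^10*Complex.I^8 + (33/16 : ℂ)*c 0^3*c 1^9*Complex.I + (77/4 : ℂ)*c 0^3*c 1^9*Complex.I^3 + (539/8 : ℂ)*c 0^3*c 1^9*Complex.I^5 + (77/4 : ℂ)*c 0^3*c 1^9*Complex.I^7 + (33/16 : ℂ)*c 0^3*c 1^9*Complex.I^9 + (2145/64 : ℂ)*c 0^4*c 1^8 + (-1089/64 : ℂ)*c 0^4*c 1^8*Complex.I^2 + (132:ℂ)*c 0^4*c 1^8*Complex.I^4 + (99:ℂ)*c 0^4*c 1^8*Complex.I^6 + (1023/64 : ℂ)*c 0^4*c 1^8*Complex.I^8 + (33/64 : ℂ)*c 0^4*c 1^8*Complex.I^10 + (33/8 : ℂ)*c 0^5*c 1^7*Complex.I + (165/2 : ℂ)*c 0^5*c 1^7*Complex.I^3 + (891/4 : ℂ)*c 0^5*c 1^7*Complex.I^5 + (165/2 : ℂ)*c 0^5*c 1^7*Complex.I^7 + (33/8 : ℂ)*c 0^5*c 1^7*Complex.I^9 + (231/8 : ℂ)*c 0^6*c 1^6*Complex.I^2 + (1617/8 : ℂ)*c 0^6*c 1^6*Complex.I^4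 + (1617/8 : ℂ)*c 0^6*c 1^6*Complex.I^6 + (231/8 : ℂ)*c 0^6*c 1^6*Complex.I^8 + (33/8 : ℂ)*c 0^7*c 1^5*Complex.I + (165/2 : ℂ)*c 0^7*c 1^5*Complex.I^3 + (891/4 : ℂ)*c 0^7*c 1^5*Complex.I^5 + (165/2 : ℂ)*c 0^7*c 1^5*Complex.I^7 + (33/8 : ℂ)*c 0^7*c 1^5*Complex.I^9 + (2145/64 : ℂ)*c 0^8*c 1^4 + (-1089/64 : ℂ)*c 0^8*c 1^4*Complex.I^2 + (132:ℂ)*c 0^8*c 1^4*Complex.I^4 + (99:ℂ)*c 0^8*c 1^4*Complex.I^6 + (1023/64 : ℂ)*c 0^8*c 1^4*Complex.I^8 + (33/64 : ℂ)*c 0^8*c 1^4*Complex.I^10 + (33/16 : ℂ)*c 0^9*c 1^3*Complex.I + (77/4 : ℂ)*c 0^9*c 1^3*Complex.I^3 + (539/8 : ℂ)*c 0^9*c 1^3*Complex.I^5 + (77/4 : ℂ)*c 0^9*c 1^3*Complex.I^7 + (33/16 : ℂ)*c 0^9*c 1^3*Complex.I^9 + (33/16 : ℂ)*c 0^10*c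 1^2*Complex.I^2 + (231/16 : ℂ)*c 0^10*c 1^2*Complex.I^4 + (231/16 : ℂ)*c 0^10*c 1^2*Complex.I^6 + (33/16 : ℂ)*c 0^10*c 1^2*Complex.I^8 + (-3/16 : ℂ)*c 0^11*c 1*Complex.I + (9/4 : ℂ)*c 0^11*c 1*Complex.I^3 + (15/8 : ℂ)*c 0^11*c 1*Complex.I^5 + (9/4 : ℂ)*c 0^11*c 1*Complex.I^7 + (-3/16 : ℂ)*c 0^11*c 1*Complex.I^9 + (-65/64 : ℂ)*c 0^12 + (65/64 : ℂ)*c 0^12*Complex.I^2 + (-1/2 : ℂ)*c 0^12*Complex.I^4 + (1/2 : ℂ)*c 0^12*Complex.I^6 + (1/64 : ℂ)*c 0^12*Complex.I^8 + (-1/64 : ℂ)*c 0^12*Complex.I^10) * Complex.I_sq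

set_option maxHeartbeats 2000000 in
lemma eig_Pp : actP Qm Pp = C om * Pp := by
  apply MvPolynomial.funext; intro c
  have hr3 := hrt3
  simp only [actP, I6, I8, I12, tP, uP, Pp, Pm, iX, iZ, Qm, sC, om, map_sub, _root_.map_mul, map_pow,
    aeval_X, aeval_C, Fin.sum_univ_two, Matrix.cons_val_zero, Matrix.cons_val_one, Matrix.head_cons,
    Matrix.of_apply, Matrix.cons_val_fin_one, Matrix.head_fin_const, _root_.map_add, Matrix.smul_apply,
    smul_eq_mul, MvPolynomial.algebraMap_eq, eval_add, eval_mul, eval_pow, eval_sub, eval_C, eval_X]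
  linear_combination ((5/8 : ℂ)*c 1^4 + (-3/8 : ℂ)*c 1^4*Complex.I*rt3 + (1/8 : ℂ)*c 1^4*Complex.I^2 + (1/8 : ℂ)*c 1^4*Complex.I^3*rt3 + (2:ℂ)*c 0*c 1^3*Complex.I + (15/4 : ℂ)*c 0^2*c 1^2 + (-1:ℂ)*c 0^2*c 1^2*rt3^2 + (3/4 : ℂ)*c 0^2*c 1^2*Complex.I*rt3 + (3/4 : ℂ)*c 0^2*c 1^2*Complex.I^2 + (-1/4 : ℂ)*c 0^2*c 1^2*Complex.I^3*rt3 + (2:ℂ)*c 0^3*c 1*Complex.I + (5/8 : ℂ)*c 0^4 + (-3/8 : ℂ)*c 0^4*Complex.I*rt3 + (1/8 : ℂ)*c 0^4*Complex.I^2 + (1/8 : ℂ)*c 0^4*Complex.I^3*rt3) * Complex.I_sq + ((1:ℂ)*c 0^2*c 1^2) * hr3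

set_option maxHeartbeats 2000000 in
lemma eig_Pm : actP Qm Pm = C (om^2) * Pm := by
  apply MvPolynomial.funext; intro c
  have hr3 := hrt3
  simp only [actP, I6, I8, I12, tP, uP, Pp, Pm, iX, iZ, Qm, sC, om, map_sub, _root_.map_mul, map_pow,
    aeval_X, aeval_C, Fin.sum_univ_two, Matrix.cons_val_zero, Matrix.cons_val_one, Matrix.head_cons,
    Matrix.of_apply, Matrix.cons_val_fin_one, Matrix.head_fin_const, _root_.map_add, Matrix.smul_apply,
    smul_eq_mul, MvPolynomial.algebraMap_eq, eval_add, eval_mul, eval_pow, eval_sub, eval_C, eval_X]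
  linear_combination ((5/8 : ℂ)*c 1^4 + (-1/4 : ℂ)*c 1^4*rt3^2 + (3/8 : ℂ)*c 1^4*Complex.I*rt3 + (1/8 : ℂ)*c 1^4*Complex.I^2 + (-1/8 : ℂ)*c 1^4*Complex.I^3*rt3 + (2:ℂ)*c 0*c 1^3*Complex.I + (15/4 : ℂ)*c 0^2*c 1^2 + (-1:ℂ)*c 0^2*c 1^2*rt3^2 + (-3/4 : ℂ)*c 0^2*c 1^2*Complex.I*rt3 + (1/2 : ℂ)*c 0^2*c 1^2*Complex.I*rt3^3 + (3/4 : ℂ)*c 0^2*c 1^2*Complex.I^2 + (1/4 : ℂ)*c 0^2*c 1^2*Complex.I^3*rt3 + (2:ℂ)*c 0^3*c 1*Complex.I + (5/8 : ℂ)*c 0^4 + (-1/4 : ℂ)*c 0^4*rt3^2 + (3/8 : ℂ)*c 0^4*Complex.I*rt3 + (1/8 : ℂ)*c 0^4*Complex.I^2 + (-1/8 : ℂ)*c 0^4*Complex.I^3*rt3) * Complex.I_sq + ((1/4 : ℂ)*c 1^4 + (1:ℂ)*c 0^2*c 1^2 + (-1/2 : ℂ)*c 0^2*c 1^2*Complex.I*rt3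 + (1/4 : ℂ)*c 0^4) * hr3

set_option maxHeartbeats 2000000 in
lemma PpPm : Pp * Pm = I8 := by
  apply MvPolynomial.funext; intro c
  have hr3 := hrt3
  simp only [actP, I6, I8, I12, tP, uP, Pp, Pm, iX, iZ, Qm, sC, om, map_sub, _root_.map_mul, map_pow,
    aeval_X, aeval_C, Fin.sum_univ_two, Matrix.cons_val_zero, Matrix.cons_val_one, Matrix.head_cons,
    Matrix.of_apply, Matrix.cons_val_fin_one, Matrix.head_fin_const, _root_.map_add, Matrix.smul_apply,
    smul_eq_mul, MvPolynomial.algebraMap_eq, eval_add, eval_mul, eval_pow, eval_sub, eval_C, eval_X]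
  linear_combination ((-4:ℂ)*c 0^4*c 1^4*rt3^2) * Complex.I_sq + ((4:ℂ)*c 0^4*c 1^4) * hr3

set_option maxHeartbeats 2000000 in
lemma Pp3 : Pp ^ 3 = I12 + C (6 * sC) * I6 ^ 2 := by
  apply MvPolynomial.funext; intro c
  have hr3 := hrt3
  simp only [actP, I6, I8, I12, tP, uP, Pp, Pm, iX, iZ, Qm, sC, om, map_sub, _root_.map_mul, map_pow,
    aeval_X, aeval_C, Fin.sum_univ_two, Matrix.cons_val_zero, Matrix.cons_val_one, Matrix.head_cons,
    Matrix.of_apply, Matrix.cons_val_fin_one, Matrix.head_fin_const, _root_.map_add, Matrix.smul_apply,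
    smul_eq_mul, MvPolynomial.algebraMap_eq, eval_add, eval_mul, eval_pow, eval_sub, eval_C, eval_X]
  linear_combination ((12:ℂ)*c 0^4*c 1^8*rt3^2 + (8:ℂ)*c 0^6*c 1^6*Complex.I*rt3^3 + (12:ℂ)*c 0^8*c 1^4*rt3^2) * Complex.I_sq + ((-12:ℂ)*c 0^4*c 1^8 + (-8:ℂ)*c 0^6*c 1^6*Complex.I*rt3 + (-12:ℂ)*c 0^8*c 1^4) * hr3

set_option maxHeartbeats 2000000 in
lemma Pm3 : Pm ^ 3 = I12 - C (6 * sC) * I6 ^ 2 := by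
  apply MvPolynomial.funext; intro c
  have hr3 := hrt3
  simp only [actP, I6, I8, I12, tP, uP, Pp, Pm, iX, iZ, Qm, sC, om, map_sub, _root_.map_mul, map_pow,
    aeval_X, aeval_C, Fin.sum_univ_two, Matrix.cons_val_zero, Matrix.cons_val_one, Matrix.head_cons,
    Matrix.of_apply, Matrix.cons_val_fin_one, Matrix.head_fin_const, _root_.map_add, Matrix.smul_apply,
    smul_eq_mul, MvPolynomial.algebraMap_eq, eval_add, eval_mul, eval_pow, eval_sub, eval_C, eval_X]
  linear_combination ((12:ℂ)*c 0^4*c 1^8*rt3^2 + (-8:ℂ)*c 0^6*c 1^6*Complex.I*rt3^3 + (12:ℂ)*c 0^8*c 1^4*rt3^2) * Complex.I_sq + ((-12:ℂ)*c 0^4*c 1^8 + (8:ℂ)*c 0^6*c 1^6*Complex.I*rt3 + (-12:ℂ)*c 0^8*c 1^4) * hr3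

lemma actP_actP (g h : Matrix (Fin 2) (Fin 2) ℂ) (p : MvPolynomial (Fin 2) ℂ) :
    actP g (actP h p) = actP (h * g) p := by
  have key : (MvPolynomial.aeval (fun i => ∑ j, C (g i j) * X j)).comp
      (MvPolynomial.aeval (fun i => ∑ j, C (h i j) * X j)) =
      MvPolynomial.aeval (R := ℂ) (fun i => ∑ j, C ((h * g) i j) * X j) := by
    apply MvPolynomial.algHom_ext
    intro i
    simp only [AlgHom.comp_apply, aeval_X, Fin.sum_univ_two, _root_.map_add, _root_.map_mul,
      aeval_C, MvPolynomial.algebraMap_eq, Matrix.mul_apply]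
    push_cast [_root_.map_add, _root_.map_mul]
    ring
  show (MvPolynomial.aeval _) ((MvPolynomial.aeval _) p) = _
  rw [← AlgHom.comp_apply, key]
  rfl

lemma actP_one (p : MvPolynomial (Fin 2) ℂ) : actP 1 p = p := by
  have : (fun i => ∑ j, C ((1 : Matrix (Fin 2) (Fin 2) ℂ) i j) * X j)
      = (X : Fin 2 → MvPolynomial (Fin 2) ℂ) := by
    funext i
    fin_cases i <;> simp [Matrix.one_apply, Fin.sum_univ_two]
  rw [actP, this, aeval_X_left_apply]

lemma iX_mem : iX ∈ W24 := Submonoid.subset_closure (by simp)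
lemma iZ_mem : iZ ∈ W24 := Submonoid.subset_closure (by simp)
lemma Qm_mem : Qm ∈ W24 := Submonoid.subset_closure (by simp)

lemma gens_fixed : ∀ g ∈ W24, actP g I6 = I6 ∧ actP g I8 = I8 ∧ actP g I12 = I12 := by
  intro g hg
  induction hg using Submonoid.closure_induction with
  | mem x hx =>
    rcases hx with h | h | h <;> subst h
    · exact ⟨act_iX_I6, act_iX_I8, act_iX_I12⟩
    · exact ⟨act_iZ_I6, act_iZ_I8, act_iZ_I12⟩
    · exact ⟨act_Qm_I6, act_Qm_I8, act_Qm_I12⟩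
  | one => exact ⟨actP_one _, actP_one _, actP_one _⟩
  | mul x y hx hy ihx ihy =>
    refine ⟨?_, ?_, ?_⟩ <;>
      rw [← actP_actP] <;> simp [ihx.1, ihx.2.1, ihx.2.2, ihy.1, ihy.2.1, ihy.2.2]

lemma adjoin_invariant {p : MvPolynomial (Fin 2) ℂ}
    (hp : p ∈ Algebra.adjoin ℂ ({I6, I8, I12} : Set (MvPolynomial (Fin 2) ℂ)))
    (g : Matrix (Fin 2) (Fin 2) ℂ) (hg : g ∈ W24) : actP g p = p := by
  induction hp using Algebra.adjoin_induction with
  | mem x hx =>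
    rcases hx with h | h | h <;> subst h
    · exact (gens_fixed g hg).1
    · exact (gens_fixed g hg).2.1
    · exact (gens_fixed g hg).2.2
  | algebraMap r => exact (MvPolynomial.aeval _).commutes r
  | add x y hx hy ihx ihy => rw [actP, _root_.map_add]; rw [actP] at ihx ihy; rw [ihx, ihy]
  | mul x y hx hy ihx ihy => rw [actP, _root_.map_mul]; rw [actP] at ihx ihy; rw [ihx, ihy]
lemma hsC : sC ^ 2 = -3 := by rw [sC, mul_pow, hrt3, I_sq]; ring

def AA : Subalgebra ℂ (MvPolynomial (Fin 2) ℂ) := Algebra.adjoin ℂ {Pp, Pm}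

def BB : Subalgebra ℂ (MvPolynomial (Fin 2) ℂ) := Algebra.adjoin ℂ {I6, I8, I12}

lemma Pp_mem : Pp ∈ AA := Algebra.subset_adjoin (by simp)
lemma Pm_mem : Pm ∈ AA := Algebra.subset_adjoin (by simp)
lemma I6_mem : I6 ∈ BB := Algebra.subset_adjoin (by simp)
lemma I8_mem : I8 ∈ BB := Algebra.subset_adjoin (by simp)
lemma I12_mem : I12 ∈ BB := Algebra.subset_adjoin (by simp)

lemma tP_mem : tP ∈ AA := by
  have hh : (C ((1:ℂ)/2) : MvPolynomial (Fin 2) ℂ) * 2 = 1 := by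
    rw [show (2 : MvPolynomial (Fin 2) ℂ) = C 2 from (map_ofNat _ 2).symm, ← _root_.map_mul]
    norm_num
  have h : tP = ((1:ℂ)/2) • (Pp + Pm) := by
    rw [smul_eq_C_mul]
    simp only [Pp, Pm, tP, uP]
    linear_combination (-(X 0^4 + X 1^4) : MvPolynomial (Fin 2) ℂ) * hh
  rw [h]; exact Subalgebra.smul_mem _ (add_mem Pp_mem Pm_mem) _

lemma uP_mem : uP ∈ AA := by
  have hh : (C (-sC/12) : MvPolynomial (Fin 2) ℂ) * (C (2*sC)) * 2 = 1 := by
    rw [show (2 : MvPolynomial (Fin 2) ℂ) = C 2 from (map_ofNat _ 2).symm, ← _root_.map_mul,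
      ← _root_.map_mul, show (-sC/12) * (2*sC) * 2 = 1 by linear_combination (-1/3 : ℂ) * hsC]
    simp
  have h : uP = (-sC/12 : ℂ) • (Pp - Pm) := by
    rw [smul_eq_C_mul]
    simp only [Pp, Pm, tP, uP]
    linear_combination (-(X 0^2 * X 1^2) : MvPolynomial (Fin 2) ℂ) * hh
  rw [h]; exact Subalgebra.smul_mem _ (sub_mem Pp_mem Pm_mem) _
def Msub : Submodule ℂ (MvPolynomial (Fin 2) ℂ) where
  carrier := {x | ∃ P ∈ AA, ∃ Q ∈ AA, x = P + I6 * Q}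
  add_mem' := by
    rintro a b ⟨P1, h1, Q1, h2, rfl⟩ ⟨P2, h3, Q2, h4, rfl⟩
    exact ⟨P1 + P2, add_mem h1 h3, Q1 + Q2, add_mem h2 h4, by ring⟩
  zero_mem' := ⟨0, zero_mem _, 0, zero_mem _, by ring⟩
  smul_mem' := by
    rintro c a ⟨P, h1, Q, h2, rfl⟩
    exact ⟨c • P, Subalgebra.smul_mem _ h1 c, c • Q, Subalgebra.smul_mem _ h2 c, by
      rw [smul_add, mul_smul_comm]⟩

lemma H_mem : ∀ k : ℕ, (X 0 ^ (4*k) + X 1 ^ (4*k) : MvPolynomial (Fin 2) ℂ) ∈ AA := by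
  intro k
  induction k using Nat.strong_induction_on with
  | _ k ih =>
    match k with
    | 0 => simpa using add_mem (one_mem AA) (one_mem AA)
    | 1 => simpa [tP] using tP_mem
    | (k+2) =>
      have e : (X 0 ^ (4*(k+2)) + X 1 ^ (4*(k+2)) : MvPolynomial (Fin 2) ℂ)
          = tP * (X 0 ^ (4*(k+1)) + X 1 ^ (4*(k+1))) - uP^2 * (X 0 ^ (4*k) + X 1 ^ (4*k)) := by
        rw [tP, uP]; ring
      rw [e]
      exact sub_mem (mul_mem tP_mem (ih (k+1) (by omega)))
        (mul_mem (pow_mem uP_mem 2) (ih k (by omega)))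

lemma W_mem : ∀ k : ℕ, ∃ G ∈ AA,
    (X 0 ^ (4*k+1) * X 1 - X 0 * X 1 ^ (4*k+1) : MvPolynomial (Fin 2) ℂ) = I6 * G := by
  intro k
  induction k using Nat.strong_induction_on with
  | _ k ih =>
    match k with
    | 0 => exact ⟨0, zero_mem _, by ring⟩
    | 1 => exact ⟨1, one_mem _, by rw [I6]; ring⟩
    | (k+2) =>
      obtain ⟨G1, hG1, he1⟩ := ih (k+1) (by omega)
      obtain ⟨G0, hG0, he0⟩ := ih k (by omega)
      refine ⟨tP * G1 - uP^2 * G0, sub_mem (mul_mem tP_mem hG1) (mul_mem (pow_mem uP_mem 2) hG0), ?_⟩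
      have e : (X 0 ^ (4*(k+2)+1) * X 1 - X 0 * X 1 ^ (4*(k+2)+1) : MvPolynomial (Fin 2) ℂ)
          = tP * (X 0 ^ (4*(k+1)+1) * X 1 - X 0 * X 1 ^ (4*(k+1)+1))
            - uP^2 * (X 0 ^ (4*k+1) * X 1 - X 0 * X 1 ^ (4*k+1)) := by
        rw [tP, uP]; ring
      rw [e, he1, he0]; ring

lemma pair_mem_le (a k : ℕ) :
    (X 0 ^ a * X 1 ^ (a+4*k) + C ((-1:ℂ)^a) * (X 0 ^ (a+4*k) * X 1 ^ a)) ∈ Msub := by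
  rcases Nat.even_or_odd a with ⟨e, he⟩ | ⟨e, he⟩
  · subst he
    have hC : ((-1:ℂ))^(e+e) = 1 := by
      rw [show e + e = 2*e by ring, pow_mul]; norm_num
    refine ⟨uP^e * (X 0^(4*k) + X 1^(4*k)), mul_mem (pow_mem uP_mem e) (H_mem k),
      0, zero_mem _, ?_⟩
    rw [hC, MvPolynomial.C_1, uP]
    ring
  · subst he
    have hC : ((-1:ℂ))^(2*e+1) = -1 := by rw [pow_succ, pow_mul]; norm_num
    obtain ⟨G, hG, hGe⟩ := W_mem k
    refine ⟨0, zero_mem _, -(uP^e * G), neg_mem (mul_mem (pow_mem uP_mem e) hG), ?_⟩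
    rw [hC, show (C (-1:ℂ) : MvPolynomial (Fin 2) ℂ) = -1 by simp]
    have e2 : (0 : MvPolynomial (Fin 2) ℂ) + I6 * -(uP^e * G) = -(uP^e * (I6 * G)) := by ring
    rw [e2, ← hGe, uP]
    ring

lemma pair_mem (a b : ℕ) (h4 : (4:ℕ) ∣ a + 3*b) :
    (X 0 ^ a * X 1 ^ b + C ((-1:ℂ)^a) * (X 0 ^ b * X 1 ^ a)) ∈ Msub := by
  rcases le_total a b with hab | hab
  · obtain ⟨k, rfl⟩ : ∃ k, b = a + 4*k := ⟨(b-a)/4, by omega⟩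
    exact pair_mem_le a k
  · obtain ⟨k, rfl⟩ : ∃ k, a = b + 4*k := ⟨(a-b)/4, by omega⟩
    have hpar : ((-1:ℂ))^(b+4*k) = (-1)^b := by
      rw [pow_add, show (4:ℕ)*k = 2*(2*k) by ring, pow_mul]; norm_num
    have hcc : (C ((-1:ℂ)^b) : MvPolynomial (Fin 2) ℂ) * C ((-1:ℂ)^b) = 1 := by
      rw [← _root_.map_mul, ← pow_add, show b + b = 2*b by ring, pow_mul]; norm_num
    have hmem := Msub.smul_mem ((-1:ℂ)^b) (pair_mem_le b k)
    rw [smul_eq_C_mul] at hmem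
    have e : (X 0 ^ (b+4*k) * X 1 ^ b + C ((-1:ℂ)^(b+4*k)) * (X 0 ^ b * X 1 ^ (b+4*k)) : MvPolynomial (Fin 2) ℂ)
        = C ((-1:ℂ)^b) * (X 0 ^ b * X 1 ^ (b+4*k) + C ((-1:ℂ)^b) * (X 0 ^ (b+4*k) * X 1 ^ b)) := by
      rw [hpar]
      linear_combination (-(X 0 ^ (b+4*k) * X 1 ^ b)) * hcc
    rwa [← e] at hmem
def actL (g : Matrix (Fin 2) (Fin 2) ℂ) :
    MvPolynomial (Fin 2) ℂ →ₗ[ℂ] MvPolynomial (Fin 2) ℂ :=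
  (MvPolynomial.aeval (fun i => ∑ j, C (g i j) * X j)).toLinearMap

lemma actL_apply (g : Matrix (Fin 2) (Fin 2) ℂ) (p : MvPolynomial (Fin 2) ℂ) :
    actL g p = actP g p := rfl

def TZ : MvPolynomial (Fin 2) ℂ →ₗ[ℂ] MvPolynomial (Fin 2) ℂ :=
  LinearMap.id + actL iZ + actL iZ ∘ₗ actL iZ + actL iZ ∘ₗ (actL iZ ∘ₗ actL iZ)

def R8 : MvPolynomial (Fin 2) ℂ →ₗ[ℂ] MvPolynomial (Fin 2) ℂ :=
  (8:ℂ)⁻¹ • (TZ + actL iX ∘ₗ TZ)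

lemma R8_inv (p : MvPolynomial (Fin 2) ℂ) (hX : actP iX p = p) (hZ : actP iZ p = p) :
    R8 p = p := by
  simp only [R8, TZ, LinearMap.smul_apply, LinearMap.add_apply, LinearMap.comp_apply,
    LinearMap.id_apply, actL_apply, _root_.map_add, hX, hZ]
  module

lemma actP_iZ_X0 : actP iZ (X 0) = C I * X 0 := by
  simp [actP, iZ, Fin.sum_univ_two]

lemma actP_iZ_X1 : actP iZ (X 1) = C (-I) * X 1 := by
  simp [actP, iZ, Fin.sum_univ_two]

lemma actP_iX_X0 : actP iX (X 0) = C I * X 1 := by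
  simp [actP, iX, Fin.sum_univ_two]

lemma actP_iX_X1 : actP iX (X 1) = C I * X 0 := by
  simp [actP, iX, Fin.sum_univ_two]

lemma actL_iZ_mono (a b : ℕ) :
    actL iZ (X 0 ^ a * X 1 ^ b) = (I^(a+3*b)) • (X 0 ^ a * X 1 ^ b : MvPolynomial (Fin 2) ℂ) := by
  rw [actL_apply, actP, _root_.map_mul, map_pow, map_pow]
  rw [show (MvPolynomial.aeval (fun i => ∑ j, C (iZ i j) * X j)) (X 0) = C I * X 0
      from actP_iZ_X0]
  rw [show (MvPolynomial.aeval (fun i => ∑ j, C (iZ i j) * X j)) (X 1) = C (-I) * X 1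
      from actP_iZ_X1]
  rw [show (-I) = I^3 by rw [pow_succ, I_sq]; ring]
  rw [smul_eq_C_mul, mul_pow, mul_pow, ← map_pow, ← map_pow, ← pow_mul, pow_add, C_mul]
  ring

lemma actL_iX_mono (a b : ℕ) :
    actL iX (X 0 ^ a * X 1 ^ b) = (I^(a+b)) • (X 0 ^ b * X 1 ^ a : MvPolynomial (Fin 2) ℂ) := by
  rw [actL_apply, actP, _root_.map_mul, map_pow, map_pow]
  rw [show (MvPolynomial.aeval (fun i => ∑ j, C (iX i j) * X j)) (X 0) = C I * X 1
      from actP_iX_X0]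
  rw [show (MvPolynomial.aeval (fun i => ∑ j, C (iX i j) * X j)) (X 1) = C I * X 0
      from actP_iX_X1]
  rw [smul_eq_C_mul, mul_pow, mul_pow, ← map_pow, ← map_pow, pow_add, C_mul]
  ring

lemma R8_mono (a b : ℕ) :
    R8 (X 0 ^ a * X 1 ^ b) = ((8:ℂ)⁻¹ * (1 + I^(a+3*b) + (I^(a+3*b))^2 + (I^(a+3*b))^3)) •
      ((X 0 ^ a * X 1 ^ b : MvPolynomial (Fin 2) ℂ) + (I^(a+b)) • (X 0 ^ b * X 1 ^ a)) := by
  have hTZ : TZ (X 0 ^ a * X 1 ^ b) = (1 + I^(a+3*b) + (I^(a+3*b))^2 + (I^(a+3*b))^3) •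
      (X 0 ^ a * X 1 ^ b : MvPolynomial (Fin 2) ℂ) := by
    simp only [TZ, LinearMap.add_apply, LinearMap.comp_apply, LinearMap.id_apply,
      actL_iZ_mono, _root_.map_smul, smul_smul]
    module
  simp only [R8, LinearMap.smul_apply, LinearMap.add_apply, LinearMap.comp_apply, hTZ,
    _root_.map_smul, actL_iX_mono, smul_smul, smul_add]
  module

lemma I_pow_mod (n : ℕ) : (I:ℂ)^n = I^(n % 4) := by
  conv_lhs => rw [← Nat.div_add_mod n 4]
  rw [pow_add, pow_mul, I_pow_four, one_pow, one_mul]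

lemma I_sum_zero {n : ℕ} (h : ¬ (4 ∣ n)) :
    (1:ℂ) + I^n + (I^n)^2 + (I^n)^3 = 0 := by
  rw [I_pow_mod n]
  rcases (show n % 4 = 1 ∨ n % 4 = 2 ∨ n % 4 = 3 by omega) with h1 | h1 | h1 <;> rw [h1]
  · linear_combination (1+I) * I_sq
  · linear_combination (1+I^4) * I_sq
  · linear_combination ((1+I^3)*(1 - I^2 + I^4)) * I_sq

lemma I_pow_dvd {n : ℕ} (h : 4 ∣ n) : (I:ℂ)^n = 1 := by
  obtain ⟨k, rfl⟩ := h
  rw [pow_mul, I_pow_four, one_pow]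

lemma I_ab {a b : ℕ} (h : 4 ∣ a + 3*b) : (I:ℂ)^(a+b) = (-1:ℂ)^a := by
  have h1 : (I:ℂ)^(a+b) * ((I:ℂ)^2)^b = 1 := by
    rw [← pow_mul, ← pow_add, show a + b + 2*b = a + 3*b by ring, I_pow_dvd h]
  rw [I_sq] at h1
  have hb2 : ((-1:ℂ))^b * ((-1:ℂ))^b = 1 := by
    rw [← pow_add, show b + b = 2*b by ring, pow_mul]; norm_num
  have h2 : (I:ℂ)^(a+b) = (-1:ℂ)^b := by
    calc (I:ℂ)^(a+b) = (I:ℂ)^(a+b) * ((-1:ℂ)^b * (-1:ℂ)^b) := by rw [hb2, mul_one]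
    _ = ((I:ℂ)^(a+b) * (-1:ℂ)^b) * (-1:ℂ)^b := by ring
    _ = (-1:ℂ)^b := by rw [h1, one_mul]
  rw [h2]
  have hpar : a % 2 = b % 2 := by omega
  rw [show a = 2*(a/2) + a % 2 by omega, show b = 2*(b/2) + b % 2 by omega, hpar,
    pow_add, pow_add, pow_mul, pow_mul]
  norm_num
lemma R8_mono_mem (a b : ℕ) : R8 (X 0 ^ a * X 1 ^ b : MvPolynomial (Fin 2) ℂ) ∈ Msub := by
  rw [R8_mono]
  by_cases h4 : (4:ℕ) ∣ a + 3*b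
  · apply Msub.smul_mem
    rw [I_ab h4, smul_eq_C_mul]
    exact pair_mem a b h4
  · rw [I_sum_zero h4]
    norm_num

lemma stage1 (p : MvPolynomial (Fin 2) ℂ) (hX : actP iX p = p) (hZ : actP iZ p = p) :
    p ∈ Msub := by
  rw [← R8_inv p hX hZ,
    show p = ∑ v ∈ p.support, monomial v (coeff v p)
      from (MvPolynomial.support_sum_monomial_coeff p).symm, map_sum]
  apply Submodule.sum_mem
  intro v hv
  have hmon : monomial v (coeff v p) = (coeff v p) • (X 0 ^ (v 0) * X 1 ^ (v 1) :
      MvPolynomial (Fin 2) ℂ) := by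
    rw [smul_eq_C_mul, MvPolynomial.monomial_eq, Finsupp.prod_fintype _ _ (fun i => pow_zero _),
      Fin.prod_univ_two]
  rw [hmon, _root_.map_smul]
  exact Msub.smul_mem _ (R8_mono_mem _ _)
lemma om_cube : om^3 = 1 := by
  rw [om, sC]
  linear_combination ((-3/8:ℂ)*rt3^2 + (1/8:ℂ)*I*rt3^3) * I_sq + ((3/8:ℂ) - (1/8:ℂ)*I*rt3) * hrt3

lemma omsum : 1 + om + om^2 = 0 := by
  rw [om, sC]
  linear_combination ((1/4:ℂ)*rt3^2) * I_sq + (-(1/4):ℂ) * hrt3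

lemma actP_Qm_C (c : ℂ) (q : MvPolynomial (Fin 2) ℂ) :
    actP Qm (C c * q) = C c * actP Qm q := by
  rw [actP, _root_.map_mul, aeval_C, MvPolynomial.algebraMap_eq]
  rfl

lemma eig_mono (j k : ℕ) :
    actP Qm (Pp^j * Pm^k) = C (om^(j+2*k)) * (Pp^j * Pm^k) := by
  rw [actP, _root_.map_mul, map_pow, map_pow]
  rw [show (MvPolynomial.aeval (fun i => ∑ j, C (Qm i j) * X j)) Pp = C om * Pp from eig_Pp]
  rw [show (MvPolynomial.aeval (fun i => ∑ j, C (Qm i j) * X j)) Pm = C (om^2) * Pm from eig_Pm]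
  rw [mul_pow, mul_pow, ← map_pow, ← map_pow, ← pow_mul, pow_add, C_mul]
  ring

def R3 : MvPolynomial (Fin 2) ℂ →ₗ[ℂ] MvPolynomial (Fin 2) ℂ :=
  (3:ℂ)⁻¹ • (LinearMap.id + actL Qm + actL Qm ∘ₗ actL Qm)

lemma R3_inv (p : MvPolynomial (Fin 2) ℂ) (hQ : actP Qm p = p) : R3 p = p := by
  simp only [R3, LinearMap.smul_apply, LinearMap.add_apply, LinearMap.comp_apply,
    LinearMap.id_apply, actL_apply, hQ]
  module

lemma actP_Qm_mul (q r : MvPolynomial (Fin 2) ℂ) :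
    actP Qm (q * r) = actP Qm q * actP Qm r :=
  _root_.map_mul (MvPolynomial.aeval _) q r

lemma R3_I6_mul (q : MvPolynomial (Fin 2) ℂ) : R3 (I6 * q) = I6 * R3 q := by
  have h1 : ∀ r : MvPolynomial (Fin 2) ℂ, actP Qm (I6 * r) = I6 * actP Qm r := by
    intro r; rw [actP_Qm_mul, act_Qm_I6]
  simp only [R3, LinearMap.smul_apply, LinearMap.add_apply, LinearMap.comp_apply,
    LinearMap.id_apply, actL_apply, h1]
  rw [← mul_add, ← mul_add, mul_smul_comm]

lemma mono_form : ∀ x ∈ Submonoid.closure ({Pp, Pm} : Set (MvPolynomial (Fin 2) ℂ)),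
    ∃ j k : ℕ, x = Pp^j * Pm^k := by
  intro x hx
  induction hx using Submonoid.closure_induction with
  | mem y hy =>
    rcases hy with h | h <;> subst h
    · exact ⟨1, 0, by ring⟩
    · exact ⟨0, 1, by ring⟩
  | one => exact ⟨0, 0, by simp⟩
  | mul a b ha hb iha ihb =>
    obtain ⟨j1, k1, rfl⟩ := iha
    obtain ⟨j2, k2, rfl⟩ := ihb
    exact ⟨j1+j2, k1+k2, by rw [pow_add, pow_add]; ring⟩

lemma R3_mono_mem (j k : ℕ) : R3 (Pp^j * Pm^k) ∈ BB := by
  have h1 := eig_mono j k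
  have h2 : actP Qm (actP Qm (Pp^j*Pm^k))
      = C (om^(j+2*k)) * (C (om^(j+2*k)) * (Pp^j*Pm^k)) := by
    rw [h1, actP_Qm_C, h1]
  have hR : R3 (Pp^j * Pm^k)
      = ((3:ℂ)⁻¹ * (1 + om^(j+2*k) + om^(j+2*k) * om^(j+2*k))) • (Pp^j*Pm^k) := by
    have e3 : R3 (Pp^j * Pm^k) = (3:ℂ)⁻¹ • ((Pp^j * Pm^k) + actP Qm (Pp^j * Pm^k)
        + actP Qm (actP Qm (Pp^j * Pm^k))) := by
      simp only [R3, LinearMap.smul_apply, LinearMap.add_apply, LinearMap.comp_apply,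
        LinearMap.id_apply, actL_apply]
    rw [e3, h2, h1]; simp only [C_mul']
    module
  rw [hR]
  by_cases h3 : (3:ℕ) ∣ j + 2*k
  · have hμ : om^(j+2*k) = 1 := by
      obtain ⟨d, hd⟩ := h3; rw [hd, pow_mul, om_cube, one_pow]
    have hone : ((3:ℂ)⁻¹ * (1 + om^(j+2*k) + om^(j+2*k) * om^(j+2*k))) = 1 := by
      rw [hμ]; norm_num
    rw [hone, one_smul]
    have hr : j % 3 = k % 3 := by omega
    have e : Pp^j * Pm^k = (Pp^3)^(j/3) * (Pm^3)^(k/3) * (Pp*Pm)^(j%3) := by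
      rw [mul_pow, ← pow_mul, ← pow_mul]
      conv_lhs => rw [show j = 3*(j/3) + j%3 by omega, show k = 3*(k/3) + k%3 by omega]
      rw [pow_add, pow_add, hr]
      ring
    rw [e, Pp3, Pm3, PpPm]
    refine mul_mem (mul_mem (pow_mem ?_ _) (pow_mem ?_ _)) (pow_mem I8_mem _)
    · exact add_mem I12_mem (by rw [C_mul']; exact Subalgebra.smul_mem _ (pow_mem I6_mem 2) _)
    · exact sub_mem I12_mem (by rw [C_mul']; exact Subalgebra.smul_mem _ (pow_mem I6_mem 2) _)
  · have hm : om^(j+2*k) = om^((j+2*k) % 3) := by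
      conv_lhs => rw [← Nat.div_add_mod (j+2*k) 3]
      rw [pow_add, pow_mul, om_cube, one_pow, one_mul]
    have hsum : (1:ℂ) + om^(j+2*k) + om^(j+2*k) * om^(j+2*k) = 0 := by
      rcases (show (j+2*k) % 3 = 1 ∨ (j+2*k) % 3 = 2 by omega) with h | h <;> rw [hm, h]
      · linear_combination omsum
      · linear_combination om * om_cube + omsum
    rw [hsum]
    norm_num

lemma R3_AA_mem : ∀ P ∈ AA, R3 P ∈ BB := by
  intro P hP
  have hP' : P ∈ Submodule.span ℂ ((Submonoid.closure ({Pp, Pm} : Set (MvPolynomial (Fin 2) ℂ))) :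
      Set (MvPolynomial (Fin 2) ℂ)) := by
    rw [← Algebra.adjoin_eq_span]; exact hP
  clear hP
  induction hP' using Submodule.span_induction with
  | mem x hx => obtain ⟨j, k, rfl⟩ := mono_form x hx; exact R3_mono_mem j k
  | zero => rw [map_zero]; exact zero_mem _
  | add x y hx hy ihx ihy => rw [map_add]; exact add_mem ihx ihy
  | smul a x hx ih => rw [_root_.map_smul]; exact Subalgebra.smul_mem _ ih _

/-- The algebra of polynomials in `x, y` invariant under the binary tetrahedral group is
generated by `I₆ = x⁵y − xy⁵`, `I₈ = x⁸ + 14x⁴y⁴ + y⁸`, `I₁₂ = x¹² − 33x⁸y⁴ − 33x⁴y⁸ + y¹²`. -/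
theorem stmt_16 (p : MvPolynomial (Fin 2) ℂ) :
    (∀ g ∈ W24, actP g p = p) ↔
      p ∈ Algebra.adjoin ℂ ({I6, I8, I12} : Set (MvPolynomial (Fin 2) ℂ)) := by
  constructor
  · intro h
    have hX := h iX iX_mem
    have hZ := h iZ iZ_mem
    have hQ := h Qm Qm_mem
    obtain ⟨P, hP, Q, hQ', hpq⟩ := stage1 p hX hZ
    have h1 : p = R3 P + I6 * R3 Q := by
      conv_lhs => rw [← R3_inv p hQ]
      rw [hpq, map_add, R3_I6_mul]
    show p ∈ BB
    rw [h1]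
    exact add_mem (R3_AA_mem P hP) (mul_mem I6_mem (R3_AA_mem Q hQ'))
  · intro h g hg
    exact adjoin_invariant h g hg
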